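/- Consider the SBCM on the path graph P_n with symmetrically placed zealots. If δ ∈ [0, 1], then there exists γ_c > 0 such that the harmonic state x̄ is linearly stable for all γ ∈ [0, γ_c) and linearly unstable for all γ > γ_c. Moreover, if δ = 1, then γ_c = 1. -/

import Mathlib

open Finset Filter

namespace SBCM

variable {V : Type*} [Fintype V] [DecidableEq V]

/-- Sigmoidal influence weight. -/
noncomputable def wt (G : SimpleGraph V) [DecidableRel G.Adj] (γ δ : ℝ) (x : V → ℝ)
    (i j : V) : ℝ :=
  if G.Adj i j then 1 / (1 + Real.exp (γ * (x i - x j) ^ 2 - γ * δ)) else 0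

/-- SBCM update operator. -/
noncomputable def F (G : SimpleGraph V) [DecidableRel G.Adj] (Z : Finset V) (γ δ : ℝ)
    (x : V → ℝ) (i : V) : ℝ :=
  if i ∈ Z then 0
  else (∑ j, wt G γ δ x i j * (x j - x i)) / (∑ j, wt G γ δ x i j)

/-- Jacobian block over the persuadable nodes. -/
noncomputable def Jp (G : SimpleGraph V) [DecidableRel G.Adj] (Z : Finset V) (γ δ : ℝ)
    (x : V → ℝ) : Matrix {v : V // v ∉ Z} {v : V // v ∉ Z} ℝ :=
  fun i j => fderiv ℝ (fun y : V → ℝ => F G Z γ δ y i.val) x (Pi.single (j : V) (1 : ℝ))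

/-- `μ` is a (real) eigenvalue of the matrix `M`. -/
def HasEig {n : Type*} [Fintype n] (M : Matrix n n ℝ) (μ : ℝ) : Prop :=
  ∃ φ : n → ℝ, φ ≠ 0 ∧ M.mulVec φ = μ • φ

/-- All eigenvalues of `M` are strictly negative. -/
def LinStable {n : Type*} [Fintype n] (M : Matrix n n ℝ) : Prop :=
  ∀ μ : ℝ, HasEig M μ → μ < 0

/-- `M` has a strictly positive eigenvalue. -/
def LinUnstable {n : Type*} [Fintype n] (M : Matrix n n ℝ) : Prop :=
  ∃ μ : ℝ, 0 < μ ∧ HasEig M μ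

end SBCM

namespace SBCM

/-- The path graph on `n + 2` nodes `0, 1, …, n + 1`. -/
def pathG (n : ℕ) : SimpleGraph (Fin (n + 2)) where
  Adj j k := (j : ℕ) + 1 = (k : ℕ) ∨ (k : ℕ) + 1 = (j : ℕ)
  symm := ⟨fun _ _ h => Or.symm h⟩
  loopless := ⟨fun a h => by rcases h with h | h <;> omega⟩

instance (n : ℕ) : DecidableRel (pathG n).Adj :=
  fun _ _ => inferInstanceAs (Decidable (_ ∨ _))

/-- The zealots of the path graph: the two endpoints. -/
def Zpath (n : ℕ) : Finset (Fin (n + 2)) := {0, Fin.last (n + 1)}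

/-- The harmonic state on the path graph with symmetrically placed zealots:
`x̄_j = −(n+1)/2 + j` (`0`-indexed). -/
noncomputable def xbarPath (n : ℕ) : Fin (n + 2) → ℝ :=
  fun j => -((n : ℝ) + 1) / 2 + (j : ℕ)

end SBCM

namespace SBCM

variable {n : ℕ}

noncomputable def sg (γ δ t : ℝ) : ℝ := (1 + Real.exp (γ * t ^ 2 - γ * δ))⁻¹

variable {n : ℕ}

lemma mem_Zpath_iff (v : Fin (n + 2)) : v ∈ Zpath n ↔ (v : ℕ) = 0 ∨ (v : ℕ) = n + 1 := by
  simp only [Zpath, Finset.mem_insert, Finset.mem_singleton, Fin.ext_iff, Fin.val_zero, Fin.val_last]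

lemma sum_adj_eq (p : ℕ) (h1 : 1 ≤ p) (h2 : p ≤ n) (hp : p < n + 2)
    (hm : p - 1 < n + 2) (hq : p + 1 < n + 2) (f : Fin (n + 2) → ℝ) :
    ∑ j : Fin (n + 2), (if (pathG n).Adj ⟨p, hp⟩ j then f j else 0)
      = f ⟨p - 1, hm⟩ + f ⟨p + 1, hq⟩ := by
  have key : ∀ j : Fin (n + 2),
      (if (pathG n).Adj ⟨p, hp⟩ j then f j else 0)
        = (if j = ⟨p - 1, hm⟩ then f j else 0) + (if j = ⟨p + 1, hq⟩ then f j else 0) := by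
    intro j
    have him : (j = (⟨p - 1, hm⟩ : Fin (n + 2))) ↔ (j : ℕ) = p - 1 := by
      rw [Fin.ext_iff]
    have hip : (j = (⟨p + 1, hq⟩ : Fin (n + 2))) ↔ (j : ℕ) = p + 1 := by
      rw [Fin.ext_iff]
    have hadj : (pathG n).Adj ⟨p, hp⟩ j ↔ ((j : ℕ) = p - 1 ∨ (j : ℕ) = p + 1) := by
      change (p + 1 = (j : ℕ) ∨ (j : ℕ) + 1 = p) ↔ _
      omega
    simp only [him, hip, hadj]
    by_cases c1 : (j : ℕ) = p - 1 <;> by_cases c2 : (j : ℕ) = p + 1 <;>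
      simp [c1, c2] <;> (intro h; exfalso; omega)
  rw [Finset.sum_congr rfl (fun j _ => key j), Finset.sum_add_distrib,
    Finset.sum_ite_eq' Finset.univ, Finset.sum_ite_eq' Finset.univ]
  simp

lemma F_path_eq (γ δ : ℝ) (p : ℕ) (h1 : 1 ≤ p) (h2 : p ≤ n) (hp : p < n + 2)
    (hm : p - 1 < n + 2) (hq : p + 1 < n + 2) :
    (fun y : Fin (n + 2) → ℝ => F (pathG n) (Zpath n) γ δ y ⟨p, hp⟩)
      = fun y : Fin (n + 2) → ℝ =>
        (sg γ δ (y ⟨p, hp⟩ - y ⟨p - 1, hm⟩) * (y ⟨p - 1, hm⟩ - y ⟨p, hp⟩)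
          + sg γ δ (y ⟨p, hp⟩ - y ⟨p + 1, hq⟩) * (y ⟨p + 1, hq⟩ - y ⟨p, hp⟩))
        * (sg γ δ (y ⟨p, hp⟩ - y ⟨p - 1, hm⟩) + sg γ δ (y ⟨p, hp⟩ - y ⟨p + 1, hq⟩))⁻¹ := by
  funext y
  have hz : (⟨p, hp⟩ : Fin (n + 2)) ∉ Zpath n := by
    rw [mem_Zpath_iff]
    push_neg
    constructor <;> · show ¬ (p = _); omega
  rw [F, if_neg hz, div_eq_mul_inv]
  congr 1
  · rw [← sum_adj_eq p h1 h2 hp hm hq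
      (fun j => sg γ δ (y ⟨p, hp⟩ - y j) * (y j - y ⟨p, hp⟩))]
    refine Finset.sum_congr rfl fun j _ => ?_
    rw [wt]
    split_ifs with h
    · rw [sg, one_div]
    · rw [zero_mul]
  · congr 1
    rw [← sum_adj_eq p h1 h2 hp hm hq (fun j => sg γ δ (y ⟨p, hp⟩ - y j))]
    refine Finset.sum_congr rfl fun j _ => ?_
    rw [wt]
    split_ifs with h
    · rw [sg, one_div]
    · rfl

noncomputable def sg' (γ δ t : ℝ) : ℝ :=
  -(Real.exp (γ * t ^ 2 - γ * δ) * (γ * (2 * t))) / (1 + Real.exp (γ * t ^ 2 - γ * δ)) ^ 2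

noncomputable def cK (γ δ : ℝ) : ℝ := 1 / 2 - γ * (1 - sg γ δ 1)

lemma den_pos (γ δ t : ℝ) : 0 < 1 + Real.exp (γ * t ^ 2 - γ * δ) := by positivity

lemma sg_pos (γ δ t : ℝ) : 0 < sg γ δ t := by unfold sg; positivity

lemma sg_neg_one (γ δ : ℝ) : sg γ δ (-1) = sg γ δ 1 := by norm_num [sg]

lemma hasDerivAt_sg (γ δ t : ℝ) : HasDerivAt (sg γ δ) (sg' γ δ t) t := by
  have h1 : HasDerivAt (fun s : ℝ => γ * s ^ 2 - γ * δ) (γ * (2 * t)) t := by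
    have := ((hasDerivAt_pow 2 t).const_mul γ).sub_const (γ * δ)
    simpa using this
  have h2 : HasDerivAt (fun s : ℝ => 1 + Real.exp (γ * s ^ 2 - γ * δ))
      (Real.exp (γ * t ^ 2 - γ * δ) * (γ * (2 * t))) t := by
    simpa using h1.exp.const_add 1
  exact h2.inv (ne_of_gt (den_pos γ δ t))

lemma sg'_one (γ δ : ℝ) : sg' γ δ 1 = -(2 * γ) * (sg γ δ 1 * (1 - sg γ δ 1)) := by
  have h := den_pos γ δ 1
  unfold sg' sg
  field_simp
  ring

lemma sg'_neg_one (γ δ : ℝ) : sg' γ δ (-1) = -sg' γ δ 1 := by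
  unfold sg'
  norm_num
  ring

lemma xbar_diff (p q : ℕ) (hp : p < n + 2) (hq : q < n + 2) :
    xbarPath n ⟨p, hp⟩ - xbarPath n ⟨q, hq⟩ = (p : ℝ) - (q : ℝ) := by
  simp [xbarPath]

lemma fderiv_F_path (γ δ : ℝ) (p : ℕ) (h1 : 1 ≤ p) (h2 : p ≤ n) (hp : p < n + 2)
    (hm : p - 1 < n + 2) (hq : p + 1 < n + 2) (v : Fin (n + 2) → ℝ) :
    fderiv ℝ (fun y : Fin (n + 2) → ℝ => F (pathG n) (Zpath n) γ δ y ⟨p, hp⟩)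
        (xbarPath n) v
      = cK γ δ * (v ⟨p - 1, hm⟩ + v ⟨p + 1, hq⟩ - 2 * v ⟨p, hp⟩) := by
  have e1 : xbarPath n ⟨p, hp⟩ - xbarPath n ⟨p - 1, hm⟩ = 1 := by
    rw [xbar_diff, Nat.cast_sub h1]; ring
  have e2 : xbarPath n ⟨p, hp⟩ - xbarPath n ⟨p + 1, hq⟩ = -1 := by
    rw [xbar_diff]; push_cast; ring
  have e3 : xbarPath n ⟨p - 1, hm⟩ - xbarPath n ⟨p, hp⟩ = -1 := by
    rw [xbar_diff, Nat.cast_sub h1]; ring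
  have e4 : xbarPath n ⟨p + 1, hq⟩ - xbarPath n ⟨p, hp⟩ = 1 := by
    rw [xbar_diff]; push_cast; ring
  set x : Fin (n + 2) → ℝ := xbarPath n with hxdef
  have hpr : ∀ k : Fin (n + 2), HasFDerivAt (fun y : Fin (n + 2) → ℝ => y k)
      (ContinuousLinearMap.proj k : (Fin (n + 2) → ℝ) →L[ℝ] ℝ) x :=
    fun k => hasFDerivAt_apply k x
  have hu1 : HasFDerivAt (fun y : Fin (n + 2) → ℝ => y ⟨p, hp⟩ - y ⟨p - 1, hm⟩)
      (ContinuousLinearMap.proj (R := ℝ) (φ := fun _ : Fin (n + 2) => ℝ) ⟨p, hp⟩ - ContinuousLinearMap.proj (R := ℝ) (φ := fun _ : Fin (n + 2) => ℝ) ⟨p - 1, hm⟩) x :=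
    (hpr _).sub (hpr _)
  have hu2 : HasFDerivAt (fun y : Fin (n + 2) → ℝ => y ⟨p, hp⟩ - y ⟨p + 1, hq⟩)
      (ContinuousLinearMap.proj (R := ℝ) (φ := fun _ : Fin (n + 2) => ℝ) ⟨p, hp⟩ - ContinuousLinearMap.proj (R := ℝ) (φ := fun _ : Fin (n + 2) => ℝ) ⟨p + 1, hq⟩) x :=
    (hpr _).sub (hpr _)
  have hw1 : HasFDerivAt (fun y : Fin (n + 2) → ℝ => y ⟨p - 1, hm⟩ - y ⟨p, hp⟩)
      (ContinuousLinearMap.proj (R := ℝ) (φ := fun _ : Fin (n + 2) => ℝ) ⟨p - 1, hm⟩ - ContinuousLinearMap.proj (R := ℝ) (φ := fun _ : Fin (n + 2) => ℝ) ⟨p, hp⟩) x :=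
    (hpr _).sub (hpr _)
  have hw2 : HasFDerivAt (fun y : Fin (n + 2) → ℝ => y ⟨p + 1, hq⟩ - y ⟨p, hp⟩)
      (ContinuousLinearMap.proj (R := ℝ) (φ := fun _ : Fin (n + 2) => ℝ) ⟨p + 1, hq⟩ - ContinuousLinearMap.proj (R := ℝ) (φ := fun _ : Fin (n + 2) => ℝ) ⟨p, hp⟩) x :=
    (hpr _).sub (hpr _)
  have hg1 : HasFDerivAt (fun y : Fin (n + 2) → ℝ => sg γ δ (y ⟨p, hp⟩ - y ⟨p - 1, hm⟩))
      (sg' γ δ 1 • (ContinuousLinearMap.proj (R := ℝ) (φ := fun _ : Fin (n + 2) => ℝ) ⟨p, hp⟩ - ContinuousLinearMap.proj (R := ℝ) (φ := fun _ : Fin (n + 2) => ℝ) ⟨p - 1, hm⟩)) x :=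
    (hasDerivAt_sg γ δ 1).comp_hasFDerivAt_of_eq x hu1 e1.symm
  have hg2 : HasFDerivAt (fun y : Fin (n + 2) → ℝ => sg γ δ (y ⟨p, hp⟩ - y ⟨p + 1, hq⟩))
      (sg' γ δ (-1) • (ContinuousLinearMap.proj (R := ℝ) (φ := fun _ : Fin (n + 2) => ℝ) ⟨p, hp⟩ - ContinuousLinearMap.proj (R := ℝ) (φ := fun _ : Fin (n + 2) => ℝ) ⟨p + 1, hq⟩)) x :=
    (hasDerivAt_sg γ δ (-1)).comp_hasFDerivAt_of_eq x hu2 e2.symm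
  have hnum := (hg1.mul hw1).add (hg2.mul hw2)
  have hden := hg1.add hg2
  have hdenx : sg γ δ (x ⟨p, hp⟩ - x ⟨p - 1, hm⟩) + sg γ δ (x ⟨p, hp⟩ - x ⟨p + 1, hq⟩) ≠ 0 := by
    have := sg_pos γ δ (x ⟨p, hp⟩ - x ⟨p - 1, hm⟩)
    have := sg_pos γ δ (x ⟨p, hp⟩ - x ⟨p + 1, hq⟩)
    positivity
  have hinv := (hasDerivAt_inv hdenx).comp_hasFDerivAt x hden
  have hF := hnum.mul hinv
  have hDval : fderiv ℝ (fun y : Fin (n + 2) → ℝ =>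
      (sg γ δ (y ⟨p, hp⟩ - y ⟨p - 1, hm⟩) * (y ⟨p - 1, hm⟩ - y ⟨p, hp⟩)
        + sg γ δ (y ⟨p, hp⟩ - y ⟨p + 1, hq⟩) * (y ⟨p + 1, hq⟩ - y ⟨p, hp⟩))
      * (sg γ δ (y ⟨p, hp⟩ - y ⟨p - 1, hm⟩) + sg γ δ (y ⟨p, hp⟩ - y ⟨p + 1, hq⟩))⁻¹) x = _ :=
    hF.fderiv
  rw [F_path_eq γ δ p h1 h2 hp hm hq, hDval]
  simp only [ContinuousLinearMap.add_apply, ContinuousLinearMap.smul_apply,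
    ContinuousLinearMap.sub_apply, ContinuousLinearMap.proj_apply, smul_eq_mul,
    Function.comp_apply, Pi.add_apply, Pi.mul_apply]
  rw [e1, e2, e3, e4, sg_neg_one, sg'_neg_one, sg'_one]
  have hs0 : sg γ δ 1 ≠ 0 := ne_of_gt (sg_pos γ δ 1)
  unfold cK
  field_simp [hs0]
  ring

lemma Jp_path (γ δ : ℝ) (i j : {v : Fin (n + 2) // v ∉ Zpath n}) :
    Jp (pathG n) (Zpath n) γ δ (xbarPath n) i j
      = cK γ δ * ((if (pathG n).Adj i.1 j.1 then 1 else 0) - 2 * (if i = j then 1 else 0)) := by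
  obtain ⟨⟨p, hp⟩, hiz⟩ := i
  obtain ⟨⟨q, hq2⟩, hjz⟩ := j
  have hbounds : 1 ≤ p ∧ p ≤ n := by
    have h : ¬(p = 0 ∨ p = n + 1) := by simpa [mem_Zpath_iff] using hiz
    omega
  obtain ⟨h1, h2⟩ := hbounds
  have hm : p - 1 < n + 2 := by omega
  have hq' : p + 1 < n + 2 := by omega
  show fderiv ℝ (fun y : Fin (n + 2) → ℝ => F (pathG n) (Zpath n) γ δ y ⟨p, hp⟩)
      (xbarPath n) (Pi.single (⟨q, hq2⟩ : Fin (n + 2)) (1 : ℝ)) = _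
  rw [fderiv_F_path γ δ p h1 h2 hp hm hq']
  rw [Pi.single_apply, Pi.single_apply, Pi.single_apply]
  have c1 : ((⟨p - 1, hm⟩ : Fin (n + 2)) = ⟨q, hq2⟩) ↔ p - 1 = q := by
    rw [Fin.ext_iff]
  have c2 : ((⟨p + 1, hq'⟩ : Fin (n + 2)) = ⟨q, hq2⟩) ↔ p + 1 = q := by
    rw [Fin.ext_iff]
  have c3 : ((⟨p, hp⟩ : Fin (n + 2)) = ⟨q, hq2⟩) ↔ p = q := by
    rw [Fin.ext_iff]
  have c4 : (pathG n).Adj (⟨p, hp⟩ : Fin (n + 2)) ⟨q, hq2⟩ ↔ (p + 1 = q ∨ q + 1 = p) :=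
    Iff.rfl
  have c5 : ((⟨⟨p, hp⟩, hiz⟩ : {v : Fin (n + 2) // v ∉ Zpath n}) = ⟨⟨q, hq2⟩, hjz⟩) ↔ p = q := by
    rw [Subtype.ext_iff, Fin.ext_iff]
  simp only [c1, c2, c3, c4, c5]
  split_ifs <;> first | ring1 | (exfalso; omega)

lemma tele (ψ : ℕ → ℝ) (m : ℕ) :
    2 * ∑ a ∈ Finset.range (m + 1), ψ a * ψ (a + 1)
        - 2 * ∑ a ∈ Finset.range (m + 2), (ψ a) ^ 2
      = -(∑ a ∈ Finset.range (m + 1), (ψ (a + 1) - ψ a) ^ 2) - (ψ 0) ^ 2 - (ψ (m + 1)) ^ 2 := by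
  induction m with
  | zero => norm_num [Finset.sum_range_succ]; ring
  | succ k ih =>
    have e : k + 1 + 2 = (k + 2) + 1 := rfl
    rw [e, Finset.sum_range_succ (f := fun a => ψ a * ψ (a + 1)),
      Finset.sum_range_succ (f := fun a => (ψ a) ^ 2),
      Finset.sum_range_succ (f := fun a => (ψ (a + 1) - ψ a) ^ 2)]
    linear_combination ih

lemma quad_neg (φ : {v : Fin (n + 2) // v ∉ Zpath n} → ℝ) (hφ : φ ≠ 0) :
    ∑ i, ∑ j, ((if (pathG n).Adj i.1 j.1 then (1 : ℝ) else 0) - 2 * (if i = j then 1 else 0))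
        * φ i * φ j < 0 := by
  classical
  set Φ : Fin (n + 2) → ℝ := fun v => if h : v ∈ Zpath n then 0 else φ ⟨v, h⟩ with hΦdef
  have hΦ0 : ∀ v ∈ Zpath n, Φ v = 0 := fun v hv => dif_pos hv
  have hΦφ : ∀ i : {v : Fin (n + 2) // v ∉ Zpath n}, Φ i.1 = φ i := by
    intro i
    simp only [hΦdef, dif_neg i.2]
  set ψ : ℕ → ℝ := fun m => if h : m < n + 2 then Φ ⟨m, h⟩ else 0 with hψdef
  have hψΦ : ∀ v : Fin (n + 2), ψ (v : ℕ) = Φ v := by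
    intro v
    simp only [hψdef, dif_pos v.isLt, Fin.eta]
  have hψ0 : ψ 0 = 0 := by
    have h0 : ((0 : Fin (n + 2)) : ℕ) = 0 := rfl
    rw [← h0, hψΦ]
    exact hΦ0 _ (by simp [Zpath])
  have hψlast : ψ (n + 1) = 0 := by
    have h0 : ((Fin.last (n + 1)) : ℕ) = n + 1 := rfl
    rw [← h0, hψΦ]
    exact hΦ0 _ (by simp [Zpath])
  -- lift sums from the subtype to the whole vertex set
  have lift : ∀ f : Fin (n + 2) → ℝ,
      (∑ i : {v : Fin (n + 2) // v ∉ Zpath n}, f i.1 * φ i) = ∑ v : Fin (n + 2), f v * Φ v := by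
    intro f
    have e1 : (∑ i : {v : Fin (n + 2) // v ∉ Zpath n}, f i.1 * φ i)
        = ∑ i : {v : Fin (n + 2) // v ∉ Zpath n}, f i.1 * Φ i.1 := by
      refine Finset.sum_congr rfl fun i _ => ?_
      rw [hΦφ]
    rw [e1, ← Finset.sum_subtype (Finset.univ.filter (fun v => v ∉ Zpath n))
      (fun v => by simp) (fun v => f v * Φ v)]
    refine Finset.sum_filter_of_ne fun v _ hne => ?_
    by_contra hv
    rw [hΦ0 v hv, mul_zero] at hne
    exact hne rfl
  have hS1 : ∑ i : {v : Fin (n + 2) // v ∉ Zpath n}, ∑ j : {v : Fin (n + 2) // v ∉ Zpath n},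
        (if (pathG n).Adj i.1 j.1 then (1 : ℝ) else 0) * φ i * φ j
      = ∑ v : Fin (n + 2), ∑ w : Fin (n + 2),
        (if (pathG n).Adj v w then (1 : ℝ) else 0) * Φ v * Φ w := by
    have step1 : ∀ i : {v : Fin (n + 2) // v ∉ Zpath n},
        ∑ j : {v : Fin (n + 2) // v ∉ Zpath n},
            (if (pathG n).Adj i.1 j.1 then (1 : ℝ) else 0) * φ i * φ j
          = (∑ w : Fin (n + 2), (if (pathG n).Adj i.1 w then (1 : ℝ) else 0) * Φ w) * φ i := by
      intro i
      rw [← lift (fun w => (if (pathG n).Adj i.1 w then (1 : ℝ) else 0))]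
      rw [Finset.sum_mul]
      refine Finset.sum_congr rfl fun j _ => ?_
      ring
    rw [Finset.sum_congr rfl fun i _ => step1 i,
      lift (fun v => ∑ w : Fin (n + 2), (if (pathG n).Adj v w then (1 : ℝ) else 0) * Φ w)]
    refine Finset.sum_congr rfl fun v _ => ?_
    rw [Finset.sum_mul]
    refine Finset.sum_congr rfl fun w _ => ?_
    ring
  have hS2 : ∑ i : {v : Fin (n + 2) // v ∉ Zpath n}, φ i ^ 2 = ∑ v : Fin (n + 2), Φ v ^ 2 := by
    have := lift Φ
    calc ∑ i : {v : Fin (n + 2) // v ∉ Zpath n}, φ i ^ 2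
        = ∑ i : {v : Fin (n + 2) // v ∉ Zpath n}, Φ i.1 * φ i := by
          refine Finset.sum_congr rfl fun i _ => ?_
          rw [hΦφ]; ring
      _ = ∑ v : Fin (n + 2), Φ v * Φ v := lift Φ
      _ = ∑ v : Fin (n + 2), Φ v ^ 2 := by
          refine Finset.sum_congr rfl fun v _ => ?_
          ring
  have hsplit : ∑ i : {v : Fin (n + 2) // v ∉ Zpath n}, ∑ j : {v : Fin (n + 2) // v ∉ Zpath n},
        ((if (pathG n).Adj i.1 j.1 then (1 : ℝ) else 0) - 2 * (if i = j then 1 else 0)) * φ i * φ j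
      = (∑ i : {v : Fin (n + 2) // v ∉ Zpath n}, ∑ j : {v : Fin (n + 2) // v ∉ Zpath n},
          (if (pathG n).Adj i.1 j.1 then (1 : ℝ) else 0) * φ i * φ j)
        - 2 * ∑ i : {v : Fin (n + 2) // v ∉ Zpath n}, φ i ^ 2 := by
    rw [Finset.mul_sum, ← Finset.sum_sub_distrib]
    refine Finset.sum_congr rfl fun i _ => ?_
    have e1 : ∀ j : {v : Fin (n + 2) // v ∉ Zpath n},
        ((if (pathG n).Adj i.1 j.1 then (1 : ℝ) else 0) - 2 * (if i = j then 1 else 0)) * φ i * φ j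
          = (if (pathG n).Adj i.1 j.1 then (1 : ℝ) else 0) * φ i * φ j
            - (if i = j then 2 * (φ i * φ j) else 0) := by
      intro j
      split_ifs <;> ring
    rw [Finset.sum_congr rfl fun j _ => e1 j, Finset.sum_sub_distrib, Finset.sum_ite_eq]
    simp only [Finset.mem_univ, if_true]
    ring
  -- convert to sums over ℕ
  have hS1' : ∑ v : Fin (n + 2), ∑ w : Fin (n + 2),
        (if (pathG n).Adj v w then (1 : ℝ) else 0) * Φ v * Φ w
      = ∑ a ∈ Finset.range (n + 2), ∑ b ∈ Finset.range (n + 2),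
        (if (a + 1 = b ∨ b + 1 = a) then (1 : ℝ) else 0) * ψ a * ψ b := by
    rw [← Fin.sum_univ_eq_sum_range (fun a => ∑ b ∈ Finset.range (n + 2),
      (if (a + 1 = b ∨ b + 1 = a) then (1 : ℝ) else 0) * ψ a * ψ b) (n + 2)]
    refine Finset.sum_congr rfl fun v _ => ?_
    rw [← Fin.sum_univ_eq_sum_range (fun b =>
      (if ((v : ℕ) + 1 = b ∨ b + 1 = (v : ℕ)) then (1 : ℝ) else 0) * ψ (v : ℕ) * ψ b) (n + 2)]
    refine Finset.sum_congr rfl fun w _ => ?_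
    rw [hψΦ v, hψΦ w]
    rfl
  have hS2' : ∑ v : Fin (n + 2), Φ v ^ 2 = ∑ a ∈ Finset.range (n + 2), ψ a ^ 2 := by
    rw [← Fin.sum_univ_eq_sum_range (fun a => ψ a ^ 2) (n + 2)]
    refine Finset.sum_congr rfl fun v _ => ?_
    rw [hψΦ v]
  -- compute the ℕ double sum
  have hT : ∑ a ∈ Finset.range (n + 2), ∑ b ∈ Finset.range (n + 2),
        (if (a + 1 = b ∨ b + 1 = a) then (1 : ℝ) else 0) * ψ a * ψ b
      = 2 * ∑ a ∈ Finset.range (n + 1), ψ a * ψ (a + 1) := by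
    have hsplit2 : ∀ a b : ℕ, (if (a + 1 = b ∨ b + 1 = a) then (1 : ℝ) else 0) * ψ a * ψ b
        = (if a + 1 = b then ψ a * ψ b else 0) + (if b + 1 = a then ψ a * ψ b else 0) := by
      intro a b
      by_cases c1 : a + 1 = b <;> by_cases c2 : b + 1 = a <;> simp [c1, c2] <;> omega
    rw [Finset.sum_congr rfl fun a _ => Finset.sum_congr rfl fun b _ => hsplit2 a b]
    have hone : ∀ g : ℕ → ℕ → ℝ, ∑ a ∈ Finset.range (n + 2), ∑ b ∈ Finset.range (n + 2),
          ((if a + 1 = b then g a b else 0) + (if b + 1 = a then g a b else 0))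
        = (∑ a ∈ Finset.range (n + 2), ∑ b ∈ Finset.range (n + 2), (if a + 1 = b then g a b else 0))
          + ∑ a ∈ Finset.range (n + 2), ∑ b ∈ Finset.range (n + 2), (if b + 1 = a then g a b else 0) := by
      intro g
      rw [← Finset.sum_add_distrib]
      exact Finset.sum_congr rfl fun a _ => Finset.sum_add_distrib
    rw [hone (fun a b => ψ a * ψ b)]
    have collapse : ∀ g : ℕ → ℕ → ℝ,
        (∑ a ∈ Finset.range (n + 2), ∑ b ∈ Finset.range (n + 2), (if a + 1 = b then g a b else 0))
          = ∑ a ∈ Finset.range (n + 1), g a (a + 1) := by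
      intro g
      have inner : ∀ a : ℕ, ∑ b ∈ Finset.range (n + 2), (if a + 1 = b then g a b else 0)
          = if a + 1 ∈ Finset.range (n + 2) then g a (a + 1) else 0 := by
        intro a
        rw [Finset.sum_ite_eq]
      rw [Finset.sum_congr rfl fun a _ => inner a, Finset.sum_range_succ]
      rw [if_neg (by simp)]
      rw [add_zero]
      refine Finset.sum_congr rfl fun a ha => ?_
      rw [if_pos]
      simp only [Finset.mem_range] at ha ⊢
      omega
    have hswap : (∑ a ∈ Finset.range (n + 2), ∑ b ∈ Finset.range (n + 2),
          (if b + 1 = a then ψ a * ψ b else 0))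
        = ∑ a ∈ Finset.range (n + 2), ∑ b ∈ Finset.range (n + 2),
          (if a + 1 = b then ψ b * ψ a else 0) := by
      rw [Finset.sum_comm]
    rw [collapse (fun a b => ψ a * ψ b), hswap, collapse (fun a b => ψ b * ψ a)]
    have : ∀ a ∈ Finset.range (n + 1), ψ (a + 1) * ψ a = ψ a * ψ (a + 1) := fun a _ => mul_comm _ _
    rw [Finset.sum_congr rfl this]
    ring
  -- put everything together
  rw [hsplit, hS1, hS2, hS1', hS2', hT]
  have htele := tele ψ n
  obtain ⟨i0, hi0⟩ : ∃ i, φ i ≠ 0 := by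
    by_contra hc
    push_neg at hc
    exact hφ (funext hc)
  have hqne : ψ ((i0.1 : Fin (n + 2)) : ℕ) ≠ 0 := by
    rw [hψΦ, hΦφ]
    exact hi0
  have hpos : 0 < ∑ a ∈ Finset.range (n + 1), (ψ (a + 1) - ψ a) ^ 2 := by
    rcases (Finset.sum_nonneg fun a _ => sq_nonneg (ψ (a + 1) - ψ a)).lt_or_eq with h | h
    · exact h
    · exfalso
      have hz : ∀ a ∈ Finset.range (n + 1), (ψ (a + 1) - ψ a) ^ 2 = 0 :=
        (Finset.sum_eq_zero_iff_of_nonneg fun a _ => sq_nonneg _).mp h.symm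
      have hall : ∀ a, a ≤ n + 1 → ψ a = 0 := by
        intro a
        induction a with
        | zero => intro _; exact hψ0
        | succ b ih =>
          intro hb
          have hb' : b ∈ Finset.range (n + 1) := by simp; omega
          have hsq := hz b hb'
          have : ψ (b + 1) - ψ b = 0 := by
            have := sq_eq_zero_iff.mp hsq
            exact this
          have hψb : ψ b = 0 := ih (by omega)
          linarith
      exact hqne (hall _ (by omega))
  rw [hψ0, hψlast] at htele
  norm_num at htele
  linarith

lemma eig_quad {m : Type*} [Fintype m] (M : Matrix m m ℝ) (μ : ℝ) (φ : m → ℝ)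
    (h : M.mulVec φ = μ • φ) :
    μ * ∑ i, φ i ^ 2 = ∑ i, ∑ j, M i j * φ i * φ j := by
  have h1 : ∀ i, ∑ j, M i j * φ j = μ * φ i := by
    intro i
    have := congrFun h i
    simpa [Matrix.mulVec, dotProduct] using this
  calc μ * ∑ i, φ i ^ 2 = ∑ i, (μ * φ i) * φ i := by
        rw [Finset.mul_sum]
        exact Finset.sum_congr rfl fun i _ => by ring
    _ = ∑ i, (∑ j, M i j * φ j) * φ i := by
        refine Finset.sum_congr rfl fun i _ => ?_
        rw [h1]
    _ = ∑ i, ∑ j, M i j * φ i * φ j := by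
        refine Finset.sum_congr rfl fun i _ => ?_
        rw [Finset.sum_mul]
        exact Finset.sum_congr rfl fun j _ => by ring

lemma sumsq_pos {m : Type*} [Fintype m] (φ : m → ℝ) (hφ : φ ≠ 0) :
    0 < ∑ i, φ i ^ 2 := by
  obtain ⟨i0, hi0⟩ : ∃ i, φ i ≠ 0 := by
    by_contra hc
    push_neg at hc
    exact hφ (funext hc)
  refine Finset.sum_pos' (fun i _ => sq_nonneg _) ⟨i0, Finset.mem_univ _, ?_⟩
  exact lt_of_le_of_ne (sq_nonneg _) (Ne.symm (pow_ne_zero 2 hi0))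

lemma Jp_hermitian (γ δ : ℝ) :
    (Jp (pathG n) (Zpath n) γ δ (xbarPath n)).IsHermitian := by
  unfold Matrix.IsHermitian
  ext i j
  rw [Matrix.conjTranspose_apply, star_trivial, Jp_path, Jp_path]
  have h1 : (pathG n).Adj j.1 i.1 ↔ (pathG n).Adj i.1 j.1 := ⟨fun h => h.symm, fun h => h.symm⟩
  have h2 : (j = i) ↔ (i = j) := eq_comm
  rw [if_congr h1 rfl rfl, if_congr h2 rfl rfl]

lemma Jp_quad (γ δ : ℝ) (μ : ℝ) (φ : {v : Fin (n + 2) // v ∉ Zpath n} → ℝ)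
    (h : (Jp (pathG n) (Zpath n) γ δ (xbarPath n)).mulVec φ = μ • φ) :
    μ * ∑ i, φ i ^ 2
      = cK γ δ * ∑ i, ∑ j, ((if (pathG n).Adj i.1 j.1 then (1 : ℝ) else 0)
          - 2 * (if i = j then 1 else 0)) * φ i * φ j := by
  rw [eig_quad _ μ φ h, Finset.mul_sum]
  refine Finset.sum_congr rfl fun i _ => ?_
  rw [Finset.mul_sum]
  refine Finset.sum_congr rfl fun j _ => ?_
  rw [Jp_path]
  ring

lemma sg_lt_one (γ δ t : ℝ) : sg γ δ t < 1 := by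
  unfold sg
  rw [inv_lt_one_iff₀]
  right
  have := Real.exp_pos (γ * t ^ 2 - γ * δ)
  linarith




end SBCM

/-- On the path graph `P_n` with `δ ∈ [0, 1]`, there is a critical value
`γ_c > 0` such that the harmonic state is linearly stable for `γ ∈ [0, γ_c)` and
linearly unstable for `γ > γ_c`; moreover `γ_c = 1` when `δ = 1`. -/
theorem stmt_13 (n : ℕ) (hn : 1 ≤ n) (δ : ℝ) (hδ : δ ∈ Set.Icc (0 : ℝ) 1) :
    ∃ γc : ℝ, 0 < γc ∧
      (∀ γ : ℝ, 0 ≤ γ → γ < γc →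
        SBCM.LinStable (SBCM.Jp (SBCM.pathG n) (SBCM.Zpath n) γ δ (SBCM.xbarPath n))) ∧
      (∀ γ : ℝ, γc < γ →
        SBCM.LinUnstable (SBCM.Jp (SBCM.pathG n) (SBCM.Zpath n) γ δ (SBCM.xbarPath n))) ∧
      (δ = 1 → γc = 1) := by
  obtain ⟨hδ0, hδ1⟩ := hδ
  set g : ℝ → ℝ := fun γ => 2 * γ * (1 - SBCM.sg γ δ 1) with hgdef
  have hmono : StrictMonoOn g (Set.Ici 0) := by
    intro a ha b hb hab
    simp only [hgdef]
    have h1 : SBCM.sg b δ 1 ≤ SBCM.sg a δ 1 := by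
      unfold SBCM.sg
      have hexp : Real.exp (a * 1 ^ 2 - a * δ) ≤ Real.exp (b * 1 ^ 2 - b * δ) := by
        apply Real.exp_le_exp.mpr
        nlinarith [Set.mem_Ici.mp ha, Set.mem_Ici.mp hb]
      have hda := SBCM.den_pos a δ 1
      have hdb := SBCM.den_pos b δ 1
      apply inv_anti₀ hda (by linarith)
    have h2a := SBCM.sg_lt_one a δ 1
    have h2b := SBCM.sg_lt_one b δ 1
    have ha0 := Set.mem_Ici.mp ha
    nlinarith
  have hcont : Continuous g := by
    apply Continuous.mul
    · fun_prop
    · apply Continuous.sub continuous_const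
      unfold SBCM.sg
      apply Continuous.inv₀
      · fun_prop
      · intro γ
        exact ne_of_gt (SBCM.den_pos γ δ 1)
  have hg0 : g 0 = 0 := by simp [hgdef]
  have hg2 : 2 ≤ g 2 := by
    have hE : (1 : ℝ) ≤ Real.exp (2 * 1 ^ 2 - 2 * δ) := by
      have := Real.exp_le_exp.mpr (show (0 : ℝ) ≤ 2 * 1 ^ 2 - 2 * δ by nlinarith)
      rwa [Real.exp_zero] at this
    have hs : SBCM.sg 2 δ 1 ≤ 1 / 2 := by
      unfold SBCM.sg
      have h2 : (2 : ℝ) ≤ 1 + Real.exp (2 * 1 ^ 2 - 2 * δ) := by linarith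
      calc (1 + Real.exp (2 * 1 ^ 2 - 2 * δ))⁻¹ ≤ (2 : ℝ)⁻¹ :=
            inv_anti₀ (by norm_num) h2
        _ = 1 / 2 := by norm_num
    simp only [hgdef]
    nlinarith
  obtain ⟨γc, hγcmem, hγc⟩ : ∃ γc ∈ Set.Icc (0 : ℝ) 2, g γc = 1 := by
    have hsub := intermediate_value_Icc (by norm_num : (0 : ℝ) ≤ 2) hcont.continuousOn
    have h1mem : (1 : ℝ) ∈ Set.Icc (g 0) (g 2) := by
      rw [hg0]
      exact ⟨by norm_num, by linarith⟩
    obtain ⟨γc, hmem, heq⟩ := hsub h1mem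
    exact ⟨γc, hmem, heq⟩
  have hγcpos : 0 < γc := by
    rcases hγcmem.1.lt_or_eq with h | h
    · exact h
    · exfalso
      rw [← h, hg0] at hγc
      norm_num at hγc
  refine ⟨γc, hγcpos, ?_, ?_, ?_⟩
  · intro γ hγ0 hγlt μ hμ
    obtain ⟨φ, hφ, heig⟩ := hμ
    have hglt : g γ < 1 := by
      rw [← hγc]
      exact hmono (Set.mem_Ici.mpr hγ0) (Set.mem_Ici.mpr hγcmem.1) hγlt
    have hcK : 0 < SBCM.cK γ δ := by
      simp only [hgdef] at hglt
      unfold SBCM.cK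
      linarith
    have hq := SBCM.quad_neg φ hφ
    have hsum := SBCM.sumsq_pos φ hφ
    have hkey := SBCM.Jp_quad γ δ μ φ heig
    nlinarith [mul_neg_of_pos_of_neg hcK hq]
  · intro γ hγgt
    have hγ0 : (0 : ℝ) ≤ γ := le_of_lt (lt_trans hγcpos hγgt)
    have hggt : 1 < g γ := by
      rw [← hγc]
      exact hmono (Set.mem_Ici.mpr hγcmem.1) (Set.mem_Ici.mpr hγ0) hγgt
    have hcK : SBCM.cK γ δ < 0 := by
      simp only [hgdef] at hggt
      unfold SBCM.cK
      linarith
    have hH := SBCM.Jp_hermitian (n := n) γ δ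
    have h1z : (⟨1, by omega⟩ : Fin (n + 2)) ∉ SBCM.Zpath n := by
      rw [SBCM.mem_Zpath_iff]
      push_neg
      constructor <;> · show ¬((1 : ℕ) = _); omega
    set i1 : {v : Fin (n + 2) // v ∉ SBCM.Zpath n} := ⟨⟨1, by omega⟩, h1z⟩ with hi1
    set φ : {v : Fin (n + 2) // v ∉ SBCM.Zpath n} → ℝ := ⇑(hH.eigenvectorBasis i1) with hφdef
    have hmv := hH.mulVec_eigenvectorBasis i1
    have hφ : φ ≠ 0 := by
      intro hc
      exact hH.eigenvectorBasis.orthonormal.ne_zero i1 (by rw [hφdef] at hc; exact (WithLp.ofLp_eq_zero 2).mp hc)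
    refine ⟨hH.eigenvalues i1, ?_, φ, hφ, hmv⟩
    have hq := SBCM.quad_neg φ hφ
    have hsum := SBCM.sumsq_pos φ hφ
    have hkey := SBCM.Jp_quad γ δ _ φ hmv
    nlinarith [mul_pos_of_neg_of_neg hcK hq]
  · intro hδ1'
    subst hδ1'
    have he : SBCM.sg γc 1 1 = 2⁻¹ := by
      unfold SBCM.sg
      norm_num
    have hgc : g γc = γc := by
      simp only [hgdef, he]
      ring
    linarith
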